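/- Let c > 0, α ∈ (0, ∞), v ∈ [-1, 1] with c - αv > 0. Then ∫_0^∞ e^{αvt} · r(t) · e^{-∫_0^t r(s) ds} dt ≤ sup_t [r(t)/(r(t) - αv)] whenever r: [0,∞) → (0,∞) is measurable with r(t) - αv > 0 for all t and ∫_0^∞ r(s) ds = ∞. More precisely, ∫_0^∞ e^{αvt} r(t) e^{-∫_0^t r(s)ds} dt = ∫_0^∞ [r(t)/(r(t)-αv)] (r(t)-αv) e^{-∫_0^t (r(s)-αv)ds} dt, and since ∫_0^∞ (r(t)-αv)e^{-∫_0^t(r(s)-αv)ds} dt ≤ 1, the integral is bounded by sup_t r(t)/(r(t)-αv). -/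

import Mathlib

open MeasureTheory Set Real

theorem stmt_13 (α v : ℝ) (r : ℝ → ℝ)
    (hα : 0 < α) (hv : v ∈ Icc (-1 : ℝ) 1)
    (hr_cont : Continuous r) (hr_pos : ∀ t, 0 < r t)
    (hr_tilt : ∀ t, 0 < r t - α * v)
    (hr_div : ∫⁻ t in Ioi (0 : ℝ), ENNReal.ofReal (r t) = ⊤)
    (hBdd : BddAbove (Set.range fun t : Set.Ici (0 : ℝ) => r t / (r t - α * v))) :
    ∫ t in Ioi (0 : ℝ), exp (α * v * t) * r t * exp (-(∫ s in (0 : ℝ)..t, r s)) ≤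
      ⨆ t : Set.Ici (0 : ℝ), r t / (r t - α * v) := by
  set M := ⨆ t : Set.Ici (0 : ℝ), r t / (r t - α * v) with hM
  set R : ℝ → ℝ := fun t => ∫ s in (0 : ℝ)..t, r s with hR
  have hRderiv : ∀ t : ℝ, HasDerivAt R (r t) t := by
    intro t
    exact intervalIntegral.integral_hasDerivAt_right
      (hr_cont.intervalIntegrable 0 t)
      (hr_cont.stronglyMeasurableAtFilter _ _)
      hr_cont.continuousAt
  have hRcont : Continuous R :=
    continuous_iff_continuousAt.2 fun t => (hRderiv t).continuousAt
  set F : ℝ → ℝ := fun t => exp (α * v * t - R t) with hF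
  set g : ℝ → ℝ := fun t => (r t - α * v) * exp (α * v * t - R t) with hg
  have hFderiv : ∀ t : ℝ, HasDerivAt F (-(g t)) t := by
    intro t
    have h1 : HasDerivAt (fun t => α * v * t - R t) (α * v - r t) t := by
      have h2 := ((hasDerivAt_id t).const_mul (α * v)).sub (hRderiv t)
      simp only [mul_one] at h2
      exact h2
    have := h1.exp
    convert this using 1
    simp only [hg, hF]
    ring
  have hgcont : Continuous g :=
    (hr_cont.sub continuous_const).mul
      (((continuous_const.mul continuous_id).sub hRcont).rexp)
  have hgnn : ∀ t, 0 ≤ g t := fun t => le_of_lt (mul_pos (hr_tilt t) (exp_pos _))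
  have hFnn : ∀ t, 0 ≤ F t := fun t => (exp_pos _).le
  have hint : ∀ T : ℝ, ∫ t in (0 : ℝ)..T, g t = F 0 - F T := by
    intro T
    have := intervalIntegral.integral_eq_sub_of_hasDerivAt
      (f := F) (f' := fun t => -(g t))
      (fun t _ => hFderiv t) ((hgcont.neg).intervalIntegrable 0 T)
    rw [intervalIntegral.integral_neg] at this
    linarith
  have hF0 : F 0 = 1 := by
    simp [hF, hR]
  have hint_le : ∀ T : ℝ, ∫ t in (0 : ℝ)..T, g t ≤ 1 := by
    intro T
    rw [hint T, hF0]
    linarith [hFnn T]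
  have hgint : IntegrableOn g (Ioi 0) := by
    apply integrableOn_Ioi_of_intervalIntegral_norm_bounded 1 0
      (fun i : ℝ => hgcont.integrableOn_Ioc) Filter.tendsto_id
    filter_upwards [Filter.eventually_ge_atTop (0 : ℝ)] with T hT
    calc ∫ t in (0:ℝ)..T, ‖g t‖ = ∫ t in (0:ℝ)..T, g t := by
          apply intervalIntegral.integral_congr
          intro x _
          exact Real.norm_of_nonneg (hgnn x)
    _ ≤ 1 := hint_le T
  have hgle : ∫ t in Ioi (0 : ℝ), g t ≤ 1 := by
    have htend := intervalIntegral_tendsto_integral_Ioi 0 hgint Filter.tendsto_id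
    exact le_of_tendsto htend (Filter.Eventually.of_forall fun T => hint_le T)
  -- ratio bound
  have hratio : ∀ t : ℝ, 0 ≤ t → r t / (r t - α * v) ≤ M := by
    intro t ht
    exact le_ciSup hBdd (⟨t, ht⟩ : Set.Ici (0 : ℝ))
  have hMpos : 0 ≤ M := by
    have := hratio 0 le_rfl
    have h0 : 0 < r 0 / (r 0 - α * v) := div_pos (hr_pos 0) (hr_tilt 0)
    linarith
  -- the integrand equals ratio * g
  have hfg : ∀ t : ℝ, exp (α * v * t) * r t * exp (-(R t)) =
      (r t / (r t - α * v)) * g t := by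
    intro t
    have hne : r t - α * v ≠ 0 := (hr_tilt t).ne'
    simp only [hg]
    rw [sub_eq_add_neg (α * v * t), Real.exp_add]
    field_simp
  have hbound : ∀ t ∈ Ioi (0 : ℝ),
      exp (α * v * t) * r t * exp (-(R t)) ≤ M * g t := by
    intro t ht
    rw [hfg t]
    exact mul_le_mul_of_nonneg_right (hratio t (le_of_lt ht)) (hgnn t)
  have hfcont : Continuous fun t => exp (α * v * t) * r t * exp (-(R t)) := by
    exact (((continuous_const.mul continuous_id).rexp.mul hr_cont).mul hRcont.neg.rexp)
  have hfnn : ∀ t, 0 ≤ exp (α * v * t) * r t * exp (-(R t)) := fun t =>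
    mul_nonneg (mul_nonneg (exp_pos _).le (hr_pos t).le) (exp_pos _).le
  have hfint : IntegrableOn (fun t => exp (α * v * t) * r t * exp (-(R t))) (Ioi 0) := by
    apply Integrable.mono (hgint.const_mul M) hfcont.aestronglyMeasurable.restrict
    filter_upwards [ae_restrict_mem measurableSet_Ioi] with t ht
    rw [Real.norm_of_nonneg (hfnn t), Real.norm_of_nonneg (mul_nonneg hMpos (hgnn t))]
    exact hbound t ht
  calc ∫ t in Ioi (0 : ℝ), exp (α * v * t) * r t * exp (-(R t))
      ≤ ∫ t in Ioi (0 : ℝ), M * g t := by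
        apply setIntegral_mono_on hfint (hgint.const_mul M) measurableSet_Ioi hbound
  _ = M * ∫ t in Ioi (0 : ℝ), g t := by rw [integral_const_mul]
  _ ≤ M * 1 := mul_le_mul_of_nonneg_left hgle hMpos
  _ = M := mul_one M
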